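/- If G is a {2K_2, K_1+C_4}-free graph with ω(G) ≥ 3, then χ(G) ≤ ω(G) + 1. -/

import Mathlib

open SimpleGraph

/-- The disjoint union of `p` edges. -/
def pK2 (p : ℕ) : SimpleGraph (Fin p × Fin 2) where
  Adj a b := a.1 = b.1 ∧ a.2 ≠ b.2
  symm := ⟨fun _ _ ⟨h1, h2⟩ => ⟨h1.symm, h2.symm⟩⟩
  loopless := ⟨fun _ ⟨_, h⟩ => h rfl⟩

/-- `G` is `H`-free: no induced subgraph of `G` is isomorphic to `H`. -/
def IsFreeOf {V W : Type*} (G : SimpleGraph V) (H : SimpleGraph W) : Prop :=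
  IsEmpty (H ↪g G)

/-- A graph on `Fin n` with edges given by a list of pairs. -/
def graphOfList (n : ℕ) (l : List (ℕ × ℕ)) : SimpleGraph (Fin n) :=
  SimpleGraph.fromRel (fun a b => ((a : ℕ), (b : ℕ)) ∈ l)

/-- The 4-wheel `K_1 + C_4`. -/
def K1C4 : SimpleGraph (Fin 5) :=
  graphOfList 5 [(0,1),(1,2),(2,3),(3,0),(0,4),(1,4),(2,4),(3,4)]

instance : DecidableRel K1C4.Adj := fun x y =>
  decidable_of_iff (x ≠ y ∧
    ((((x:ℕ),(y:ℕ)) ∈ [(0,1),(1,2),(2,3),(3,0),(0,4),(1,4),(2,4),(3,4)]) ∨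
     (((y:ℕ),(x:ℕ)) ∈ [(0,1),(1,2),(2,3),(3,0),(0,4),(1,4),(2,4),(3,4)]))) Iff.rfl

instance : DecidableRel (pK2 2).Adj := fun x y =>
  decidable_of_iff (x.1 = y.1 ∧ x.2 ≠ y.2) Iff.rfl

/-- If `G` is `2K₂`-free then it contains no induced `2K₂` given by explicit vertices. -/
lemma no2K2 {V : Type*} {G : SimpleGraph V} (h1 : IsFreeOf G (pK2 2)) {a b c d : V}
    (hab : G.Adj a b) (hcd : G.Adj c d)
    (hac : ¬G.Adj a c) (had : ¬G.Adj a d) (hbc : ¬G.Adj b c) (hbd : ¬G.Adj b d) : False := by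
  have hca : ¬G.Adj c a := fun h => hac h.symm
  have hda : ¬G.Adj d a := fun h => had h.symm
  have hcb : ¬G.Adj c b := fun h => hbc h.symm
  have hdb : ¬G.Adj d b := fun h => hbd h.symm
  have hba : G.Adj b a := hab.symm
  have hdc : G.Adj d c := hcd.symm
  have hne1 : a ≠ b := hab.ne
  have hne2 : b ≠ a := hab.ne'
  have hne3 : c ≠ d := hcd.ne
  have hne4 : d ≠ c := hcd.ne'
  have hne5 : a ≠ c := fun h => had (by rw [h]; exact hcd)
  have hne6 : c ≠ a := hne5.symm
  have hne7 : a ≠ d := fun h => hac (by rw [h]; exact hdc)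
  have hne8 : d ≠ a := hne7.symm
  have hne9 : b ≠ c := fun h => hbd (by rw [h]; exact hcd)
  have hne10 : c ≠ b := hne9.symm
  have hne11 : b ≠ d := fun h => hbc (by rw [h]; exact hdc)
  have hne12 : d ≠ b := hne11.symm
  refine h1.false ⟨⟨fun p => ![![a,b],![c,d]] p.1 p.2, ?_⟩, @fun x y => ?_⟩
  · rintro ⟨i, j⟩ ⟨k, l⟩ h
    fin_cases i <;> fin_cases j <;> fin_cases k <;> fin_cases l <;>
      simp_all
  · obtain ⟨i, j⟩ := x
    obtain ⟨k, l⟩ := y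
    fin_cases i <;> fin_cases j <;> fin_cases k <;> fin_cases l <;>
      first
        | exact iff_of_false G.irrefl (by decide)
        | exact iff_of_true (by assumption) (by decide)
        | exact iff_of_false (by assumption) (by decide)

/-- If `G` is `K₁+C₄`-free then it contains no induced 4-wheel given by explicit vertices:
`a b c d` is the 4-cycle and `z` the hub. -/
lemma noW4 {V : Type*} {G : SimpleGraph V} (h2 : IsFreeOf G K1C4) {a b c d z : V}
    (hab : G.Adj a b) (hbc : G.Adj b c) (hcd : G.Adj c d) (hda : G.Adj d a)
    (hza : G.Adj z a) (hzb : G.Adj z b) (hzc : G.Adj z c) (hzd : G.Adj z d)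
    (hac : ¬ G.Adj a c) (hbd : ¬ G.Adj b d)
    (hac' : a ≠ c) (hbd' : b ≠ d) : False := by
  have hca : ¬G.Adj c a := fun h => hac h.symm
  have hdb : ¬G.Adj d b := fun h => hbd h.symm
  have hba := hab.symm; have hcb := hbc.symm; have hdc := hcd.symm; have had := hda.symm
  have haz := hza.symm; have hbz := hzb.symm; have hcz := hzc.symm; have hdz := hzd.symm
  have e1 : a ≠ b := hab.ne
  have e2 : b ≠ a := hab.ne'
  have e3 : b ≠ c := hbc.ne
  have e4 : c ≠ b := hbc.ne'
  have e5 : c ≠ d := hcd.ne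
  have e6 : d ≠ c := hcd.ne'
  have e7 : d ≠ a := hda.ne
  have e8 : a ≠ d := hda.ne'
  have e9 : z ≠ a := hza.ne
  have e10 : a ≠ z := hza.ne'
  have e11 : z ≠ b := hzb.ne
  have e12 : b ≠ z := hzb.ne'
  have e13 : z ≠ c := hzc.ne
  have e14 : c ≠ z := hzc.ne'
  have e15 : z ≠ d := hzd.ne
  have e16 : d ≠ z := hzd.ne'
  have e17 : c ≠ a := hac'.symm
  have e18 : d ≠ b := hbd'.symm
  refine h2.false ⟨⟨![a,b,c,d,z], ?_⟩, @fun x y => ?_⟩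
  · intro x y h
    fin_cases x <;> fin_cases y <;> simp_all
  · fin_cases x <;> fin_cases y <;>
      first
        | exact iff_of_false G.irrefl (by decide)
        | exact iff_of_true (by assumption) (by decide)
        | exact iff_of_false (by assumption) (by decide)

open Finset in
/-- A canonical choice of an element of a nonempty finset `L` (relative to an ambient
finset `K`), designed so that choices from two "complementary-ish" subsets differ. -/
def thePick {V : Type*} [LinearOrder V] (K L : Finset V) (hL : L.Nonempty) : V :=
  if hT : (K \ L).Nonempty then
    if hx : (L.filter (fun x => (K \ L).min' hT < x)).Nonempty then
      (L.filter (fun x => (K \ L).min' hT < x)).min' hx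
    else L.min' hL
  else L.min' hL

open Finset in
lemma thePick_mem {V : Type*} [LinearOrder V] (K L : Finset V) (hL : L.Nonempty) :
    thePick K L hL ∈ L := by
  unfold thePick
  split_ifs with h1 h2
  · exact (mem_filter.1 (min'_mem _ h2)).1
  · exact min'_mem _ hL
  · exact min'_mem _ hL

open Finset in
lemma thePick_spec {V : Type*} [LinearOrder V] (K L : Finset V) (hL : L.Nonempty)
    (hT : (K \ L).Nonempty) :
    ((K \ L).min' hT < thePick K L hL ∧
      ∀ x ∈ L, (K \ L).min' hT < x → thePick K L hL ≤ x) ∨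
    (thePick K L hL = L.min' hL ∧ ∀ x ∈ L, x ≤ (K \ L).min' hT) := by
  unfold thePick
  rw [dif_pos hT]
  split_ifs with hx
  · left
    exact ⟨(mem_filter.1 (min'_mem _ hx)).2,
      fun x hxL hlt => min'_le _ x (mem_filter.2 ⟨hxL, hlt⟩)⟩
  · right
    refine ⟨rfl, fun x hxL => ?_⟩
    by_contra h
    push_neg at h
    exact hx ⟨x, mem_filter.2 ⟨hxL, h⟩⟩

open Finset in
/-- The key property of `thePick`: two subsets of `K` of size at least 2 covering `K` and
meeting in at most one element get distinct picks. -/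
lemma thePick_ne {V : Type*} [LinearOrder V] (K L₁ L₂ : Finset V) (h₁ : L₁ ⊆ K) (h₂ : L₂ ⊆ K)
    (hc₁ : 2 ≤ L₁.card) (hc₂ : 2 ≤ L₂.card)
    (hu : L₁ ∪ L₂ = K) (hi : (L₁ ∩ L₂).card ≤ 1)
    (hL₁ : L₁.Nonempty) (hL₂ : L₂.Nonempty) :
    thePick K L₁ hL₁ ≠ thePick K L₂ hL₂ := by
  intro heq
  have hm1 : thePick K L₁ hL₁ ∈ L₁ := thePick_mem K L₁ hL₁
  have hm2 : thePick K L₁ hL₁ ∈ L₂ := by rw [heq]; exact thePick_mem K L₂ hL₂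
  have hT₁ : (K \ L₁).Nonempty := by
    rw [sdiff_nonempty]
    intro hsub
    have : L₂ ⊆ L₁ ∩ L₂ := subset_inter (h₂.trans hsub) Subset.rfl
    have := card_le_card this
    omega
  have hT₂ : (K \ L₂).Nonempty := by
    rw [sdiff_nonempty]
    intro hsub
    have : L₁ ⊆ L₁ ∩ L₂ := subset_inter Subset.rfl (h₁.trans hsub)
    have := card_le_card this
    omega
  have hTsub₁ : K \ L₁ ⊆ L₂ := by
    intro x hx
    rw [mem_sdiff] at hx
    have : x ∈ L₁ ∪ L₂ := hu ▸ hx.1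
    rw [mem_union] at this
    tauto
  have hTsub₂ : K \ L₂ ⊆ L₁ := by
    intro x hx
    rw [mem_sdiff] at hx
    have : x ∈ L₁ ∪ L₂ := hu ▸ hx.1
    rw [mem_union] at this
    tauto
  have ht₁m : (K \ L₁).min' hT₁ ∈ K \ L₁ := min'_mem _ _
  have ht₂m : (K \ L₂).min' hT₂ ∈ K \ L₂ := min'_mem _ _
  have ht₁L₂ : (K \ L₁).min' hT₁ ∈ L₂ := hTsub₁ ht₁m
  have ht₂L₁ : (K \ L₂).min' hT₂ ∈ L₁ := hTsub₂ ht₂m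
  have htne : (K \ L₁).min' hT₁ ≠ (K \ L₂).min' hT₂ := by
    intro h
    exact (mem_sdiff.1 ht₂m).2 (h ▸ ht₁L₂)
  have hs₁ := thePick_spec K L₁ hL₁ hT₁
  have hs₂ := thePick_spec K L₂ hL₂ hT₂
  rw [← heq] at hs₂
  set m := thePick K L₁ hL₁ with hm
  set t₁ := (K \ L₁).min' hT₁ with ht₁
  set t₂ := (K \ L₂).min' hT₂ with ht₂
  rcases hs₁ with ⟨hgt₁, hmin₁⟩ | ⟨hfb₁, hub₁⟩
  · rcases hs₂ with ⟨hgt₂, hmin₂⟩ | ⟨hfb₂, hub₂⟩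
    · rcases lt_or_gt_of_ne htne with hlt | hlt
      · have hle : m ≤ t₂ := hmin₁ t₂ ht₂L₁ hlt
        have hne : m ≠ t₂ := fun h => (mem_sdiff.1 ht₂m).2 (h ▸ hm2)
        exact absurd hgt₂ (not_lt.2 (le_of_lt (lt_of_le_of_ne hle hne)))
      · have hle : m ≤ t₁ := hmin₂ t₁ ht₁L₂ hlt
        have hne : m ≠ t₁ := fun h => (mem_sdiff.1 ht₁m).2 (h ▸ hm1)
        exact absurd hgt₁ (not_lt.2 (le_of_lt (lt_of_le_of_ne hle hne)))
    · have : m ≤ t₁ := hfb₂ ▸ min'_le _ t₁ ht₁L₂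
      exact absurd hgt₁ (not_lt.2 this)
  · rcases hs₂ with ⟨hgt₂, hmin₂⟩ | ⟨hfb₂, hub₂⟩
    · have : m ≤ t₂ := hfb₁ ▸ min'_le _ t₂ ht₂L₁
      exact absurd hgt₂ (not_lt.2 this)
    · exact htne (le_antisymm (hub₂ t₁ ht₁L₂) (hub₁ t₂ ht₂L₁))

open Finset in
theorem chromatic_le_of_2K2_K1C4_free {V : Type*} [Fintype V] (G : SimpleGraph V)
    (h1 : IsFreeOf G (pK2 2)) (h2 : IsFreeOf G K1C4) (hω : 3 ≤ G.cliqueNum) :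
    G.chromaticNumber ≤ ((G.cliqueNum + 1 : ℕ) : ℕ∞) := by
  classical
  letI : LinearOrder V := LinearOrder.lift' (fun v => (Fintype.equivFin V) v)
    (Fintype.equivFin V).injective
  obtain ⟨K, hK⟩ := G.exists_isNClique_cliqueNum
  have hbound : ∀ t : Finset V, G.IsClique ↑t → t.card ≤ G.cliqueNum :=
    fun t h => IsClique.card_le_cliqueNum (tc := h)
  have hKcard : K.card = G.cliqueNum := hK.card_eq
  have hKclique : G.IsClique ↑K := hK.isClique
  set S : V → Finset V := fun v => K.filter (fun u => ¬ G.Adj v u) with hSdef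
  have hSsub : ∀ v, S v ⊆ K := fun v => filter_subset _ _
  have hS_nonadj : ∀ v u, u ∈ S v → ¬ G.Adj v u := fun v u h => (mem_filter.1 h).2
  have hS_memK : ∀ v u, u ∈ S v → u ∈ K := fun v u h => (mem_filter.1 h).1
  have hS_adj : ∀ v u, u ∈ K → u ∉ S v → G.Adj v u := by
    intro v u huK h
    by_contra hna
    exact h (mem_filter.2 ⟨huK, hna⟩)
  have hSne : ∀ v, v ∉ K → (S v).Nonempty := by
    intro v hv
    rw [nonempty_iff_ne_empty]
    intro hemp
    have hcl : G.IsClique ↑(insert v K) := by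
      rw [coe_insert]
      refine hKclique.insert ?_
      intro b hb _
      refine hS_adj v b hb ?_
      simp [hemp]
    have hle := hbound _ hcl
    rw [card_insert_of_notMem hv, hKcard] at hle
    omega
  have key_inter : ∀ v w, v ∉ K → w ∉ K → G.Adj v w → (S v ∩ S w).card ≤ 1 := by
    intro v w hv hw hvw
    by_contra hgt
    push_neg at hgt
    obtain ⟨u₁, hu₁, u₂, hu₂, hne⟩ := one_lt_card.mp hgt
    rw [mem_inter] at hu₁ hu₂
    exact no2K2 h1 hvw
      (hKclique (mem_coe.2 (hS_memK _ _ hu₁.1)) (mem_coe.2 (hS_memK _ _ hu₂.1)) hne)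
      (hS_nonadj _ _ hu₁.1) (hS_nonadj _ _ hu₂.1) (hS_nonadj _ _ hu₁.2) (hS_nonadj _ _ hu₂.2)
  have key_union : ∀ v w, v ∉ K → w ∉ K → G.Adj v w →
      2 ≤ (S v).card → 2 ≤ (S w).card → S v ∪ S w = K := by
    intro v w hv hw hvw hc₁ hc₂
    apply Finset.Subset.antisymm (union_subset (hSsub v) (hSsub w))
    intro z hz
    by_contra hzu
    rw [mem_union] at hzu
    push_neg at hzu
    have hzv : G.Adj v z := hS_adj v z hz hzu.1
    have hzw : G.Adj w z := hS_adj w z hz hzu.2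
    have hSvw : (S v \ S w).Nonempty := by
      rw [sdiff_nonempty]
      intro hsub
      have hh2 : (S v ∩ S w).card ≤ 1 := key_inter v w hv hw hvw
      have hh3 := card_le_card (subset_inter (Subset.rfl : S v ⊆ S v) hsub)
      omega
    have hSwv : (S w \ S v).Nonempty := by
      rw [sdiff_nonempty]
      intro hsub
      have hh3 := card_le_card (subset_inter (Subset.rfl : S w ⊆ S w) hsub)
      have hh2 : (S v ∩ S w).card ≤ 1 := key_inter v w hv hw hvw
      rw [inter_comm] at hh2
      omega
    obtain ⟨a, ha⟩ := hSvw
    obtain ⟨c, hc⟩ := hSwv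
    rw [mem_sdiff] at ha hc
    have haK : a ∈ K := hS_memK _ _ ha.1
    have hcK : c ∈ K := hS_memK _ _ hc.1
    have hnav : ¬ G.Adj v a := hS_nonadj _ _ ha.1
    have hnwc : ¬ G.Adj w c := hS_nonadj _ _ hc.1
    have hwa : G.Adj w a := hS_adj w a haK ha.2
    have hvc : G.Adj v c := hS_adj v c hcK hc.2
    have hane : a ≠ c := fun h => hnav (by rw [h]; exact hvc)
    have haz : a ≠ z := fun h => hnav (by rw [h]; exact hzv)
    have hcz : c ≠ z := fun h => hnwc (by rw [h]; exact hzw)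
    exact noW4 h2 hvw hwa
      (hKclique (mem_coe.2 haK) (mem_coe.2 hcK) hane)
      hvc.symm hzv.symm hzw.symm
      (hKclique (mem_coe.2 hz) (mem_coe.2 haK) haz.symm)
      (hKclique (mem_coe.2 hz) (mem_coe.2 hcK) hcz.symm)
      hnav hnwc
      (fun h => hv (by rw [h]; exact haK))
      (fun h => hw (by rw [h]; exact hcK))
  have hA_indep : ∀ v w, v ∉ K → w ∉ K → (S v).card = 1 → (S w).card = 1 →
      ¬ G.Adj v w := by
    intro v w hv hw hcv hcw hvw
    obtain ⟨u₁, hu₁⟩ := card_eq_one.mp hcv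
    obtain ⟨u₂, hu₂⟩ := card_eq_one.mp hcw
    have hu₁S : u₁ ∈ S v := by rw [hu₁]; exact mem_singleton_self u₁
    have hu₂S : u₂ ∈ S w := by rw [hu₂]; exact mem_singleton_self u₂
    have hu₁K : u₁ ∈ K := hS_memK _ _ hu₁S
    have hu₂K : u₂ ∈ K := hS_memK _ _ hu₂S
    have hvne : v ≠ w := hvw.ne
    have hvadj : ∀ u ∈ K, u ≠ u₁ → G.Adj v u := by
      intro u hu hne
      refine hS_adj v u hu ?_
      rw [hu₁]
      simp [hne]
    have hwadj : ∀ u ∈ K, u ≠ u₂ → G.Adj w u := by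
      intro u hu hne
      refine hS_adj w u hu ?_
      rw [hu₂]
      simp [hne]
    by_cases he : u₁ = u₂
    · subst he
      have hcl : G.IsClique ↑(insert v (insert w (K.erase u₁))) := by
        intro x hx y hy hxy
        simp only [coe_insert, Set.mem_insert_iff, mem_coe, mem_erase] at hx hy
        rcases hx with rfl | rfl | ⟨hxne, hxK⟩ <;> rcases hy with rfl | rfl | ⟨hyne, hyK⟩
        · exact absurd rfl hxy
        · exact hvw
        · exact hvadj _ hyK hyne
        · exact hvw.symm
        · exact absurd rfl hxy
        · exact hwadj _ hyK hyne
        · exact (hvadj _ hxK hxne).symm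
        · exact (hwadj _ hxK hxne).symm
        · exact hKclique (mem_coe.2 hxK) (mem_coe.2 hyK) hxy
      have hcard := hbound _ hcl
      have hwni : w ∉ K.erase u₁ := fun h => hw (mem_of_mem_erase h)
      have hvni : v ∉ insert w (K.erase u₁) := by
        rw [mem_insert]
        rintro (rfl | h)
        · exact hvne rfl
        · exact hv (mem_of_mem_erase h)
      rw [card_insert_of_notMem hvni, card_insert_of_notMem hwni,
        card_erase_of_mem hu₁K, hKcard] at hcard
      omega
    · have hu₂e : u₂ ∈ K.erase u₁ := mem_erase.2 ⟨fun hh => he hh.symm, hu₂K⟩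
      have hzne : ((K.erase u₁).erase u₂).Nonempty := by
        rw [← card_pos, card_erase_of_mem hu₂e, card_erase_of_mem hu₁K, hKcard]
        omega
      obtain ⟨z, hz⟩ := hzne
      rw [mem_erase] at hz
      obtain ⟨hz2, hz'⟩ := hz
      rw [mem_erase] at hz'
      obtain ⟨hz1, hzK⟩ := hz'
      exact noW4 h2 hvw
        (hwadj u₁ hu₁K he)
        (hKclique (mem_coe.2 hu₁K) (mem_coe.2 hu₂K) he)
        (hvadj u₂ hu₂K (fun hh => he hh.symm)).symm
        (hvadj z hzK hz1).symm
        (hwadj z hzK hz2).symm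
        (hKclique (mem_coe.2 hzK) (mem_coe.2 hu₁K) hz1)
        (hKclique (mem_coe.2 hzK) (mem_coe.2 hu₂K) hz2)
        (hS_nonadj v u₁ hu₁S)
        (hS_nonadj w u₂ hu₂S)
        (fun h => hv (by rw [h]; exact hu₁K))
        (fun h => hw (by rw [h]; exact hu₂K))
  -- build the coloring
  have hcol : G.Colorable (G.cliqueNum + 1) := by
    have C : G.Coloring (Option {x // x ∈ K}) := by
      refine Coloring.mk (fun v =>
        if hv : v ∈ K then some ⟨v, hv⟩
        else if (S v).card = 1 then none
        else some ⟨thePick K (S v) (hSne v hv), hSsub v (thePick_mem _ _ _)⟩) ?_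
      intro x y hadj
      by_cases hx : x ∈ K <;> by_cases hy : y ∈ K
      · rw [dif_pos hx, dif_pos hy]
        simp [hadj.ne]
      · rw [dif_pos hx, dif_neg hy]
        by_cases hcy : (S y).card = 1
        · rw [if_pos hcy]
          simp
        · rw [if_neg hcy]
          intro h
          rw [Option.some.injEq, Subtype.mk.injEq] at h
          have hmem := thePick_mem K (S y) (hSne y hy)
          rw [← h] at hmem
          exact hS_nonadj y x hmem hadj.symm
      · rw [dif_neg hx, dif_pos hy]
        by_cases hcx : (S x).card = 1
        · rw [if_pos hcx]
          simp
        · rw [if_neg hcx]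
          intro h
          rw [Option.some.injEq, Subtype.mk.injEq] at h
          have hmem := thePick_mem K (S x) (hSne x hx)
          rw [h] at hmem
          exact hS_nonadj x y hmem hadj
      · rw [dif_neg hx, dif_neg hy]
        by_cases hcx : (S x).card = 1 <;> by_cases hcy : (S y).card = 1
        · rw [if_pos hcx, if_pos hcy]
          intro _
          exact hA_indep x y hx hy hcx hcy hadj
        · rw [if_pos hcx, if_neg hcy]
          simp
        · rw [if_neg hcx, if_pos hcy]
          simp
        · rw [if_neg hcx, if_neg hcy]
          intro h
          rw [Option.some.injEq, Subtype.mk.injEq] at h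
          have hcx2 : 2 ≤ (S x).card := by
            have := (hSne x hx).card_pos
            omega
          have hcy2 : 2 ≤ (S y).card := by
            have := (hSne y hy).card_pos
            omega
          exact thePick_ne K (S x) (S y) (hSsub x) (hSsub y) hcx2 hcy2
            (key_union x y hx hy hadj hcx2 hcy2) (key_inter x y hx hy hadj)
            (hSne x hx) (hSne y hy) h
    have hc := C.colorable
    rwa [Fintype.card_option, Fintype.card_coe, hKcard] at hc
  exact hcol.chromaticNumber_le
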